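/- Let K be a field with a non-archimedean absolute value, b ∈ K, and φ(x,y) = (y, x + y² + b). If P = (x,y) satisfies |y|² > max(|x|, |b|, 1), then the forward local canonical height satisfies λ⁺(P) := lim_{N→∞} 2^{-N} log⁺‖φ^N(P)‖ = log|y|. Symmetrically, if |x|² > max(|y|, |b|, 1), then λ⁻(P) := lim_{N→∞} 2^{-N} log⁺‖φ^{-N}(P)‖ = log|x|. -/

import Mathlib

open Filter

private lemma na_add {K : Type*} [Field K] (v : AbsoluteValue K ℝ)
    (hna : IsNonarchimedean v) {a c : K} (h : v c < v a) : v (a + c) = v a := by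
  have h1 : v (a + c) ≤ max (v a) (v c) := hna a c
  have h2 : v ((a + c) + (-c)) ≤ max (v (a + c)) (v (-c)) := hna _ _
  rw [add_neg_cancel_right, v.map_neg] at h2
  have h3 : v a ≤ v (a + c) := by
    rcases le_max_iff.mp h2 with h' | h'
    · exact h'
    · linarith
  exact le_antisymm (by rw [max_eq_left h.le] at h1; exact h1) h3

private lemma main_aux {K : Type*} [Field K] (v : AbsoluteValue K ℝ) (b : K)
    (ψ : K × K → K × K)
    (hc1 : ∀ Q : K × K, v (ψ Q).1 = v Q.2)
    (hc2 : ∀ Q : K × K, v Q.2 ^ 2 > max (v Q.1) (v b) → v (ψ Q).2 = v Q.2 ^ 2)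
    (P : K × K) (hP : v P.2 ^ 2 > max (v P.1) (max (v b) 1)) :
    Tendsto (fun N : ℕ => ((2 : ℝ)⁻¹) ^ N *
      Real.log (max (max (v (ψ^[N] P).1) (v (ψ^[N] P).2)) 1)) atTop
      (nhds (Real.log (v P.2))) := by
  set c := v P.2 with hcdef
  have h1c : 1 < c ^ 2 := lt_of_le_of_lt (le_max_of_le_right (le_max_right _ _)) hP
  have hc : 1 < c := by nlinarith [v.nonneg P.2]
  have key : ∀ N : ℕ, v ((ψ^[N]) P).2 = c ^ (2 ^ N) ∧
      v ((ψ^[N]) P).2 ^ 2 > max (v ((ψ^[N]) P).1) (max (v b) 1) := by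
    intro N
    induction N with
    | zero => exact ⟨by simp [hcdef], by simpa using hP⟩
    | succ N ih =>
      obtain ⟨h2, hInv⟩ := ih
      set Q := (ψ^[N]) P with hQ
      have hiter : (ψ^[N + 1]) P = ψ Q := by rw [Function.iterate_succ_apply']
      have hvb : v b < v Q.2 ^ 2 :=
        lt_of_le_of_lt (le_max_of_le_right (le_max_left _ _)) hInv
      have hnew2 : v (ψ Q).2 = c ^ (2 ^ (N + 1)) := by
        rw [hc2 Q (lt_of_le_of_lt (max_le_max le_rfl (le_max_left _ _)) hInv), h2,
          ← pow_mul, pow_succ]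
      have hnew1 : v (ψ Q).1 = c ^ (2 ^ N) := by rw [hc1, h2]
      refine ⟨by rw [hiter, hnew2], ?_⟩
      rw [hiter, hnew2, hnew1, ← pow_mul]
      have hexp : 2 ^ (N + 1) * 2 = 2 ^ (N + 2) := (pow_succ 2 (N + 1)).symm
      rw [hexp]
      have e1 : c ^ (2 ^ N) < c ^ (2 ^ (N + 2)) :=
        pow_lt_pow_right₀ hc (Nat.pow_lt_pow_right one_lt_two (by omega))
      have e2 : v b < c ^ (2 ^ (N + 2)) := by
        have hb2 : v b < c ^ 2 := lt_of_le_of_lt (le_max_left _ _)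
          (lt_of_le_of_lt (le_max_right _ _) hP)
        have hee : (2 : ℕ) ≤ 2 ^ (N + 2) := by
          calc (2 : ℕ) = 2 ^ 1 := (pow_one 2).symm
          _ ≤ 2 ^ (N + 2) := Nat.pow_le_pow_right (by norm_num) (by omega)
        exact lt_of_lt_of_le hb2 (pow_le_pow_right₀ hc.le hee)
      have e3 : (1 : ℝ) < c ^ (2 ^ (N + 2)) := one_lt_pow₀ hc (by positivity)
      exact max_lt e1 (max_lt e2 e3)
  have heq : ∀ N : ℕ, 1 ≤ N → ((2 : ℝ)⁻¹) ^ N *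
      Real.log (max (max (v ((ψ^[N]) P).1) (v ((ψ^[N]) P).2)) 1) = Real.log c := by
    intro N hN
    obtain ⟨M, rfl⟩ : ∃ M, N = M + 1 := ⟨N - 1, by omega⟩
    have h2 : v ((ψ^[M + 1]) P).2 = c ^ (2 ^ (M + 1)) := (key (M + 1)).1
    have h1 : v ((ψ^[M + 1]) P).1 = c ^ (2 ^ M) := by
      rw [Function.iterate_succ_apply', hc1, (key M).1]
    have hle : c ^ (2 ^ M) ≤ c ^ (2 ^ (M + 1)) :=
      pow_le_pow_right₀ hc.le (Nat.pow_le_pow_right (by norm_num) (by omega))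
    have h1le : (1 : ℝ) ≤ c ^ (2 ^ (M + 1)) := one_le_pow₀ hc.le
    rw [h1, h2, max_eq_right hle, max_eq_left h1le, Real.log_pow]
    push_cast
    rw [inv_pow, ← mul_assoc, inv_mul_cancel₀ (by positivity), one_mul]
  refine Tendsto.congr' ?_ tendsto_const_nhds
  filter_upwards [eventually_ge_atTop 1] with N hN
  exact (heq N hN).symm

theorem stmt13 {K : Type*} [Field K] (v : AbsoluteValue K ℝ)
    (hna : IsNonarchimedean v) (b : K)
    (φ φi : K × K → K × K)
    (hφ : ∀ P, φ P = (P.2, P.1 + P.2 ^ 2 + b))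
    (hφi : ∀ P, φi P = (P.2 - P.1 ^ 2 - b, P.1))
    (P : K × K) :
    ((v P.2) ^ 2 > max (v P.1) (max (v b) 1) →
      Tendsto (fun N : ℕ => ((2 : ℝ)⁻¹) ^ N *
        Real.log (max (max (v (φ^[N] P).1) (v (φ^[N] P).2)) 1)) atTop
        (nhds (Real.log (v P.2)))) ∧
    ((v P.1) ^ 2 > max (v P.2) (max (v b) 1) →
      Tendsto (fun N : ℕ => ((2 : ℝ)⁻¹) ^ N *
        Real.log (max (max (v (φi^[N] P).1) (v (φi^[N] P).2)) 1)) atTop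
        (nhds (Real.log (v P.1)))) := by
  constructor
  · intro hP
    refine main_aux v b φ (fun Q => by rw [hφ]) (fun Q hQ => ?_) P hP
    rw [hφ]
    have hre : Q.1 + Q.2 ^ 2 + b = Q.2 ^ 2 + (Q.1 + b) := by ring
    show v (Q.1 + Q.2 ^ 2 + b) = v Q.2 ^ 2
    rw [hre, na_add v hna ?_, v.map_pow]
    rw [v.map_pow]
    calc v (Q.1 + b) ≤ max (v Q.1) (v b) := hna _ _
      _ < v Q.2 ^ 2 := hQ
  · intro hP
    -- conjugate φi by swap
    set ψ : K × K → K × K := Prod.swap ∘ φi ∘ Prod.swap with hψ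
    have hswap : ∀ N : ℕ, (ψ^[N]) (Prod.swap P) = Prod.swap ((φi^[N]) P) := by
      intro N
      induction N with
      | zero => simp
      | succ N ih =>
        rw [Function.iterate_succ_apply', Function.iterate_succ_apply', ih]
        show Prod.swap (φi (Prod.swap ((φi^[N] P).swap))) = _
        rw [Prod.swap_swap]
    have hc1 : ∀ Q : K × K, v (ψ Q).1 = v Q.2 := by
      intro Q; simp [hψ, hφi]
    have hc2 : ∀ Q : K × K, v Q.2 ^ 2 > max (v Q.1) (v b) → v (ψ Q).2 = v Q.2 ^ 2 := by
      intro Q hQ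
      have : (ψ Q).2 = Q.1 - Q.2 ^ 2 - b := by simp [hψ, hφi]
      rw [this]
      have hre : Q.1 - Q.2 ^ 2 - b = -(Q.2 ^ 2 + (b - Q.1)) := by ring
      rw [hre, v.map_neg, na_add v hna ?_, v.map_pow]
      rw [v.map_pow]
      have : v (b - Q.1) ≤ max (v b) (v Q.1) := by
        rw [sub_eq_add_neg]
        calc v (b + -Q.1) ≤ max (v b) (v (-Q.1)) := hna _ _
          _ = max (v b) (v Q.1) := by rw [v.map_neg]
      calc v (b - Q.1) ≤ max (v b) (v Q.1) := this
        _ = max (v Q.1) (v b) := max_comm _ _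
        _ < v Q.2 ^ 2 := hQ
    have := main_aux v b ψ hc1 hc2 (Prod.swap P) (by simpa using hP)
    simp only [hswap] at this
    simpa [max_comm] using this
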